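/- arXiv:0907.5339 — 3 statements merged into one kernel-verified Lean document; each statement's English description precedes it below -/
import Mathlib

section
/- (Lifting criterion.) Let p : E → B be a covering of small categories, X a path connected small category, f : X → B a functor, and fix an object b₀ of B, e₀ ∈ p⁻¹(b₀), and x₀ an object of X with f(x₀) = b₀. Then there exists a (necessarily unique) functor g : X → E with p ∘ g = f and g(x₀) = e₀ if and only if f_*(π₁(X,x₀)) ⊆ p_*(π₁(E,e₀)) as subgroups of π₁(B,b₀). -/
open CategoryTheory

universe v u v' u' w

namespace Paper

variable (C : Type u) [Category.{v} C]

/-- The groupoidification `π(C)` of `C`: the localization of `C` at all of its morphisms,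
whose morphisms are equivalence classes of zigzags of morphisms of `C`. -/
abbrev piCat := (⊤ : MorphismProperty C).Localization

/-- The canonical functor `C ⥤ π(C)` (the identity on objects). -/
abbrev piQ : C ⥤ piCat C := (⊤ : MorphismProperty C).Q

lemma piQ_isIso {x y : C} (f : x ⟶ y) : IsIso ((piQ C).map f) :=
  MorphismProperty.Q_inverts ⊤ f trivial

/-- `π₀(C)`: the set of objects of `C` modulo the equivalence relation generated by
`a ∼ b` whenever there is a morphism `a ⟶ b`. -/
abbrev pi0 := ConnectedComponents C

/-- The fundamental group `π₁(C, x) = Hom_{π(C)}(x, x)` (the group of automorphisms of `x`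
in the groupoidification of `C`; every morphism of `π(C)` is invertible). -/
abbrev pi1 (x : C) := Aut ((piQ C).obj x)

variable {C} {D : Type u'} [Category.{v'} D]

/-- The functor `π(C) ⥤ π(D)` induced by `F : C ⥤ D`. -/
noncomputable def piMap (F : C ⥤ D) : piCat C ⥤ piCat D :=
  Localization.Construction.lift (F ⋙ piQ D)
    (fun _ _ f _ => MorphismProperty.Q_inverts ⊤ (F.map f) trivial)

/-- The homomorphism `π₁(C, x) →* π₁(D, F(x))` induced by `F : C ⥤ D`. -/
noncomputable def pi1Map (F : C ⥤ D) (x : C) : pi1 C x →* pi1 D (F.obj x) :=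
  (piMap F).mapAut ((piQ C).obj x)

/-- Transport of fundamental groups along an equality of base points. -/
noncomputable def pi1Cast {x y : C} (h : x = y) : pi1 C x ≃* pi1 C y := by subst h; exact MulEquiv.refl _

/-- A functor `F : C ⥤ D` is a weak 1-equivalence if the induced maps
`π₀(C) → π₀(D)` and `π₁(C, x) → π₁(D, F(x))` (for every object `x`) are bijections. -/
structure IsWeak1Equiv (F : C ⥤ D) : Prop where
  bij0 : Function.Bijective F.mapConnectedComponents
  bij1 : ∀ x : C, Function.Bijective (pi1Map F x)

end Paper
namespace Paper

/-- The terminal category `∗`. -/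
abbrev Pt := Discrete PUnit.{1}

/-- The inclusion `∗ → [1]` picking the object `0`. -/
def pick0 : Pt ⥤ Fin 2 := (Functor.const Pt).obj 0
/-- The inclusion `∗ → [1]` picking the object `1`. -/
def pick1 : Pt ⥤ Fin 2 := (Functor.const Pt).obj 1
/-- The inclusion `∗ → [1]ᵒᵖ` picking the object `0`. -/
def pick0op : Pt ⥤ (Fin 2)ᵒᵖ := (Functor.const Pt).obj (Opposite.op 0)

/-- Right lifting property of `p` against `u`, for strictly commuting squares of functors. -/
def FunctorRLP {A : Type*} {X : Type*} {E : Type*} {B : Type*}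
    [Category A] [Category X] [Category E] [Category B]
    (u : A ⥤ X) (p : E ⥤ B) : Prop :=
  ∀ (F : A ⥤ E) (G : X ⥤ B), F ⋙ p = u ⋙ G → ∃ H : X ⥤ E, u ⋙ H = F ∧ H ⋙ p = G

/-- Unique right lifting property of `p` against `u`. -/
def FunctorURLP {A : Type*} {X : Type*} {E : Type*} {B : Type*}
    [Category A] [Category X] [Category E] [Category B]
    (u : A ⥤ X) (p : E ⥤ B) : Prop :=
  ∀ (F : A ⥤ E) (G : X ⥤ B), F ⋙ p = u ⋙ G → ∃! H : X ⥤ E, u ⋙ H = F ∧ H ⋙ p = G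

/-- A functor is a covering iff it has the unique right lifting property with
respect to the two inclusions `∗ → [1]` picking `0` and `1`. -/
def IsCovering {E : Type*} {B : Type*} [Category E] [Category B] (p : E ⥤ B) : Prop :=
  FunctorURLP pick0 p ∧ FunctorURLP pick1 p

/-- The category `I₂ : 1 ← 0 → 2`. -/
inductive I2 : Type
  | z | a | b

instance : PartialOrder I2 where
  le x y := x = y ∨ x = I2.z
  le_refl x := Or.inl rfl
  le_trans x y z hxy hyz := hxy.elim (fun h => h ▸ hyz) fun h => Or.inr h
  le_antisymm x y hxy hyx := by
    rcases hxy with h | h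
    · exact h
    · rcases hyx with h' | h'
      · exact h'.symm
      · rw [h, h']

/-- The identity-on-objects functor `I₂ ⥤ [2]`. -/
def i2Incl : I2 ⥤ Fin 3 :=
  Monotone.functor (f := fun x => match x with | I2.z => 0 | I2.a => 1 | I2.b => 2)
    (by rintro x y (rfl | rfl)
        · exact le_refl _
        · cases y <;> simp)

/-- The objects of the category `CS¹ : 0 → 1 ⇉ 2` (with `0` initial). -/
inductive CS1 : Type
  | x0 | x1 | x2

/-- The morphisms of `CS¹`. -/
inductive CS1.Hom : CS1 → CS1 → Type
  | id (x : CS1) : CS1.Hom x x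
  | a : CS1.Hom CS1.x0 CS1.x1
  | c : CS1.Hom CS1.x0 CS1.x2
  | f : CS1.Hom CS1.x1 CS1.x2
  | g : CS1.Hom CS1.x1 CS1.x2

/-- Composition in `CS¹`. -/
def CS1.comp : ∀ {x y z : CS1}, CS1.Hom x y → CS1.Hom y z → CS1.Hom x z
  | _, _, _, .id _, h => h
  | _, _, _, .a, .id _ => .a
  | _, _, _, .a, .f => .c
  | _, _, _, .a, .g => .c
  | _, _, _, .c, .id _ => .c
  | _, _, _, .f, .id _ => .f
  | _, _, _, .g, .id _ => .g

instance : Category CS1 where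
  Hom := CS1.Hom
  id := CS1.Hom.id
  comp := CS1.comp
  id_comp _ := rfl
  comp_id u := by cases u <;> rfl
  assoc u v w := by cases u <;> cases v <;> cases w <;> rfl

/-- The identity-on-objects functor `CS¹ ⥤ [2]`. -/
def cs1Incl : CS1 ⥤ Fin 3 where
  obj x := match x with | CS1.x0 => 0 | CS1.x1 => 1 | CS1.x2 => 2
  map {x y} u := match u with
    | .id _ => 𝟙 _
    | .a => homOfLE (by decide)
    | .c => homOfLE (by decide)
    | .f => homOfLE (by decide)
    | .g => homOfLE (by decide)
  map_id _ := rfl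
  map_comp _ _ := Subsingleton.elim _ _

/-- A functor is a fibration of the 1-type model structure iff it has the right
lifting property with respect to the six members of the set `J`:
`∗ → [1]`, `∗ → [1]ᵒᵖ`, `I₂ → [2]`, `I₂ᵒᵖ → [2]ᵒᵖ`, `CS¹ → [2]`, `(CS¹)ᵒᵖ → [2]ᵒᵖ`. -/
def Is1Fibration {E : Type*} {B : Type*} [Category E] [Category B] (p : E ⥤ B) : Prop :=
  FunctorRLP pick0 p ∧ FunctorRLP pick0op p ∧
  FunctorRLP i2Incl p ∧ FunctorRLP i2Incl.op p ∧
  FunctorRLP cs1Incl p ∧ FunctorRLP cs1Incl.op p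

end Paper

namespace Paper

section Covering

variable {E : Type u} {B : Type u'} [Category.{v} E] [Category.{v'} B]

lemma sigma_tgt_ext {C : Type*} [Category C] {a : C} {b b' : C} (g : a ⟶ b) (g' : a ⟶ b')
    (hb : b = b') (hg : g ≫ eqToHom hb = g') :
    (⟨b, g⟩ : Σ x : C, a ⟶ x) = ⟨b', g'⟩ := by
  subst hb; simpa using hg

lemma sigma_tgt_eq {C : Type*} [Category C] {a : C} {b b' : C} {g : a ⟶ b} {g' : a ⟶ b'}
    (h : (⟨b, g⟩ : Σ x : C, a ⟶ x) = ⟨b', g'⟩) :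
    ∃ hb : b = b', g ≫ eqToHom hb = g' := by
  obtain rfl : b = b' := congrArg Sigma.fst h
  exact ⟨rfl, by simpa using h⟩

lemma sigma_src_ext {C : Type*} [Category C] {a : C} {b b' : C} (g : b ⟶ a) (g' : b' ⟶ a)
    (hb : b = b') (hg : eqToHom hb.symm ≫ g = g') :
    (⟨b, g⟩ : Σ x : C, x ⟶ a) = ⟨b', g'⟩ := by
  subst hb; simpa using hg

lemma sigma_src_eq {C : Type*} [Category C] {a : C} {b b' : C} {g : b ⟶ a} {g' : b' ⟶ a}
    (h : (⟨b, g⟩ : Σ x : C, x ⟶ a) = ⟨b', g'⟩) :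
    ∃ hb : b = b', eqToHom hb.symm ≫ g = g' := by
  obtain rfl : b = b' := congrArg Sigma.fst h
  exact ⟨rfl, by simpa using h⟩

lemma pt_ext {C : Type*} [Category C] (F G : Pt ⥤ C) (h : F.obj ⟨⟨⟩⟩ = G.obj ⟨⟨⟩⟩) :
    F = G := by
  refine CategoryTheory.Functor.ext ?_ ?_
  · rintro ⟨⟨⟩⟩; exact h
  · rintro ⟨⟨⟩⟩ ⟨⟨⟩⟩ f
    have hf : f = 𝟙 (⟨⟨⟩⟩ : Pt) := Subsingleton.elim _ _
    subst hf
    simp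

lemma aux1 {C : Type*} [Category C] {X Y Y' : C} (g : X ⟶ Y) (h1 : X = X) (h2 : Y = Y')
    (h3 : Y' = Y) : eqToHom h1 ≫ (g ≫ eqToHom h2) ≫ eqToHom h3 = g := by
  subst h2; simp

lemma aux2 {C : Type*} [Category C] {X X' Y : C} (g : X ⟶ Y) (h1 : X = X') (h2 : X' = X)
    (h3 : Y = Y) : eqToHom h1 ≫ (eqToHom h2 ≫ g) ≫ eqToHom h3 = g := by
  subst h1; simp

lemma aux3 {C : Type*} [Category C] {X X' Y Z : C} (k : X ⟶ Y) (a : X' = X) (b : Y = Z)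
    (c : Z = Y) (d : X' = X) : (eqToHom a ≫ k ≫ eqToHom b) ≫ eqToHom c = eqToHom d ≫ k := by
  subst a b; simp

lemma aux4 {C : Type*} [Category C] {X V Y Z : C} (a : X = V) (b : V = X) (k : X ⟶ Y)
    (c : Y = Z) (d : Y = Z) : eqToHom a ≫ eqToHom b ≫ k ≫ eqToHom c = k ≫ eqToHom d := by
  subst a c; simp

lemma aux5 {C : Type*} [Category C] {X Y : C} (A : X ⟶ Y) (h1 : X = X) (h2 : Y = Y) :
    A ≫ 𝟙 Y = (eqToHom h1 ≫ A ≫ eqToHom h2) ≫ 𝟙 Y := by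
  simp

lemma aux6 {C : Type*} [Category C] {X Y : C} (A : X ⟶ X) (h1 : X = Y) (h2 : Y = X)
    (h3 : X = Y) (h4 : Y = X) :
    A = eqToHom h1 ≫ (eqToHom h2 ≫ A ≫ eqToHom h3) ≫ eqToHom h4 := by
  subst h1; simp

/-- the morphism `0 ⟶ 1` in `Fin 2`. -/
def ar01 : (0 : Fin 2) ⟶ 1 := homOfLE (by decide)

example (g : (3:Fin 5) = 3) : True := trivial

variable (p : E ⥤ B)

/-- Unique lifting of morphisms at the source. -/
lemma covering_src (hp : IsCovering p) (e : E) (t : Σ b : B, (p.obj e ⟶ b)) :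
    ∃! l : Σ e' : E, (e ⟶ e'),
      (⟨p.obj l.1, p.map l.2⟩ : Σ b : B, (p.obj e ⟶ b)) = t := by
  obtain ⟨b, g⟩ := t
  have sq : (Functor.const Pt).obj e ⋙ p = pick0 ⋙ ComposableArrows.mk₁ g :=
    pt_ext _ _ rfl
  obtain ⟨H, ⟨h1, h2⟩, huniq⟩ := hp.1 ((Functor.const Pt).obj e) (ComposableArrows.mk₁ g) sq
  have hobj0 : H.obj 0 = e := Functor.congr_obj h1 ⟨⟨⟩⟩
  have hobj1 : p.obj (H.obj 1) = b := Functor.congr_obj h2 1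
  refine ⟨⟨H.obj 1, eqToHom hobj0.symm ≫ H.map ar01⟩, ?_, ?_⟩
  · apply sigma_tgt_ext _ _ hobj1
    have hcomp := Functor.congr_hom h2 ar01
    simp only [Functor.comp_obj, Functor.comp_map] at hcomp
    have hg : (ComposableArrows.mk₁ g).map ar01 = g := rfl
    rw [Functor.map_comp, hcomp, hg, eqToHom_map]
    simp
    exact aux1 _ _ _ _
  · rintro ⟨e', φ⟩ hl
    obtain ⟨hb, hgφ⟩ := sigma_tgt_eq hl
    have hsq1 : pick0 ⋙ ComposableArrows.mk₁ φ = (Functor.const Pt).obj e :=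
      pt_ext _ _ rfl
    have hsq2 : ComposableArrows.mk₁ φ ⋙ p = ComposableArrows.mk₁ g := by
      refine ComposableArrows.ext₁ rfl hb ?_
      show p.map φ = _
      rw [← hgφ]
      simp
      exact (aux1 _ _ _ _).symm
    have hH : ComposableArrows.mk₁ φ = H := huniq _ ⟨hsq1, hsq2⟩
    have he' : e' = H.obj 1 := Functor.congr_obj hH 1
    apply sigma_tgt_ext _ _ he'
    have hm := Functor.congr_hom hH ar01
    have h0 : e = H.obj 0 := Functor.congr_obj hH 0
    have hφ : (ComposableArrows.mk₁ φ).map ar01 = φ := rfl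
    rw [hφ] at hm
    rw [hm]
    simp
    exact aux3 _ _ _ _ _

/-- Unique lifting of morphisms at the target. -/
lemma covering_tgt (hp : IsCovering p) (e : E) (t : Σ b : B, (b ⟶ p.obj e)) :
    ∃! l : Σ e' : E, (e' ⟶ e),
      (⟨p.obj l.1, p.map l.2⟩ : Σ b : B, (b ⟶ p.obj e)) = t := by
  obtain ⟨b, g⟩ := t
  have sq : (Functor.const Pt).obj e ⋙ p = pick1 ⋙ ComposableArrows.mk₁ g :=
    pt_ext _ _ rfl
  obtain ⟨H, ⟨h1, h2⟩, huniq⟩ := hp.2 ((Functor.const Pt).obj e) (ComposableArrows.mk₁ g) sq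
  have hobj1 : H.obj 1 = e := Functor.congr_obj h1 ⟨⟨⟩⟩
  have hobj0 : p.obj (H.obj 0) = b := Functor.congr_obj h2 0
  refine ⟨⟨H.obj 0, H.map ar01 ≫ eqToHom hobj1⟩, ?_, ?_⟩
  · apply sigma_src_ext _ _ hobj0
    have hcomp := Functor.congr_hom h2 ar01
    simp only [Functor.comp_obj, Functor.comp_map] at hcomp
    have hg : (ComposableArrows.mk₁ g).map ar01 = g := rfl
    rw [Functor.map_comp, hcomp, hg, eqToHom_map]
    simp
    exact aux1 _ _ _ _
  · rintro ⟨e', φ⟩ hl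
    obtain ⟨hb, hgφ⟩ := sigma_src_eq hl
    have hsq1 : pick1 ⋙ ComposableArrows.mk₁ φ = (Functor.const Pt).obj e :=
      pt_ext _ _ rfl
    have hsq2 : ComposableArrows.mk₁ φ ⋙ p = ComposableArrows.mk₁ g := by
      refine ComposableArrows.ext₁ hb rfl ?_
      show p.map φ = _
      rw [← hgφ]
      simp
      exact (aux2 _ _ _ _).symm
    have hH : ComposableArrows.mk₁ φ = H := huniq _ ⟨hsq1, hsq2⟩
    have he' : e' = H.obj 0 := Functor.congr_obj hH 0
    apply sigma_src_ext _ _ he'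
    have hm := Functor.congr_hom hH ar01
    have h1' : e = H.obj 1 := Functor.congr_obj hH 1
    have hφ : (ComposableArrows.mk₁ φ).map ar01 = φ := rfl
    rw [hφ] at hm
    rw [hm]
    simp
    exact aux4 _ _ _ _ _

end Covering
end Paper
namespace Paper
section Fiber

variable {E : Type u} {B : Type u'} [Category.{v} E] [Category.{v'} B]
variable (p : E ⥤ B) (hp : IsCovering p)
include hp

/-- The chosen source-lift. -/
noncomputable def transp {b b' : B} (g : b ⟶ b') (x : {e : E // p.obj e = b}) :
    Σ e' : E, (x.1 ⟶ e') :=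
  (covering_src p hp x.1 ⟨b', eqToHom x.2 ≫ g⟩).exists.choose

lemma transp_spec {b b' : B} (g : b ⟶ b') (x : {e : E // p.obj e = b}) :
    (⟨p.obj (transp p hp g x).1, p.map (transp p hp g x).2⟩ : Σ b0 : B, (p.obj x.1 ⟶ b0))
      = ⟨b', eqToHom x.2 ≫ g⟩ :=
  (covering_src p hp x.1 ⟨b', eqToHom x.2 ≫ g⟩).exists.choose_spec

lemma transp_obj {b b' : B} (g : b ⟶ b') (x : {e : E // p.obj e = b}) :
    p.obj (transp p hp g x).1 = b' :=
  congrArg Sigma.fst (transp_spec p hp g x)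

lemma transp_map {b b' : B} (g : b ⟶ b') (x : {e : E // p.obj e = b}) :
    p.map (transp p hp g x).2 ≫ eqToHom (transp_obj p hp g x) = eqToHom x.2 ≫ g :=
  (sigma_tgt_eq (transp_spec p hp g x)).choose_spec

/-- Uniqueness of source lifts (pointwise form). -/
lemma src_lift_unique {e : E} {e₁ e₂ : E} (φ₁ : e ⟶ e₁) (φ₂ : e ⟶ e₂)
    (h : (⟨p.obj e₁, p.map φ₁⟩ : Σ b : B, (p.obj e ⟶ b)) = ⟨p.obj e₂, p.map φ₂⟩) :
    (⟨e₁, φ₁⟩ : Σ e' : E, (e ⟶ e')) = ⟨e₂, φ₂⟩ := by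
  obtain ⟨hu, -, hq⟩ := covering_src p hp e ⟨p.obj e₂, p.map φ₂⟩
  rw [hq ⟨e₁, φ₁⟩ h, hq ⟨e₂, φ₂⟩ rfl]

/-- Uniqueness of target lifts (pointwise form). -/
lemma tgt_lift_unique {e : E} {e₁ e₂ : E} (φ₁ : e₁ ⟶ e) (φ₂ : e₂ ⟶ e)
    (h : (⟨p.obj e₁, p.map φ₁⟩ : Σ b : B, (b ⟶ p.obj e)) = ⟨p.obj e₂, p.map φ₂⟩) :
    (⟨e₁, φ₁⟩ : Σ e' : E, (e' ⟶ e)) = ⟨e₂, φ₂⟩ := by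
  obtain ⟨hu, -, hq⟩ := covering_tgt p hp e ⟨p.obj e₂, p.map φ₂⟩
  rw [hq ⟨e₁, φ₁⟩ h, hq ⟨e₂, φ₂⟩ rfl]

/-- Characterization of the chosen transport. -/
lemma transp_eq {b b' : B} (g : b ⟶ b') (x : {e : E // p.obj e = b}) {e' : E}
    (φ : x.1 ⟶ e') (h' : p.obj e' = b')
    (hφ : p.map φ ≫ eqToHom h' = eqToHom x.2 ≫ g) :
    (⟨(transp p hp g x).1, transp_obj p hp g x⟩ : {e : E // p.obj e = b'}) = ⟨e', h'⟩ := by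
  have h1 : (⟨p.obj e', p.map φ⟩ : Σ b0 : B, (p.obj x.1 ⟶ b0)) = ⟨b', eqToHom x.2 ≫ g⟩ :=
    sigma_tgt_ext _ _ h' hφ
  have h2 := src_lift_unique p hp (transp p hp g x).2 φ ((transp_spec p hp g x).trans h1.symm)
  exact Subtype.ext (congrArg Sigma.fst h2)

/-- The fiber functor `B ⥤ Type u` of a covering. -/
noncomputable def Fib : B ⥤ Type u where
  obj b := {e : E // p.obj e = b}
  map {b b'} g := TypeCat.ofHom fun x => ⟨(transp p hp g x).1, transp_obj p hp g x⟩
  map_id b := by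
    refine ConcreteCategory.hom_ext _ _ fun x => ?_
    exact transp_eq p hp (𝟙 b) x (𝟙 x.1) x.2 (by simp)
  map_comp {b b' b''} g g' := by
    refine ConcreteCategory.hom_ext _ _ fun x => ?_
    set t₁ := transp p hp g x with ht₁
    have h2 := transp_eq p hp g' ⟨t₁.1, transp_obj p hp g x⟩
      (transp p hp g' ⟨t₁.1, transp_obj p hp g x⟩).2 (transp_obj p hp g' _) (transp_map p hp g' _)
    refine (transp_eq p hp (g ≫ g') x
      (t₁.2 ≫ (transp p hp g' ⟨t₁.1, transp_obj p hp g x⟩).2)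
      (transp_obj p hp g' _) ?_).trans rfl
    rw [Functor.map_comp, Category.assoc, transp_map p hp g' _]
    show p.map t₁.2 ≫ eqToHom (transp_obj p hp g x) ≫ g' = _
    rw [← Category.assoc, transp_map p hp g x]
    simp

lemma Fib_map_eq {b b' : B} (g : b ⟶ b') (x : (Fib p hp).obj b) {e' : E}
    (φ : x.1 ⟶ e') (h' : p.obj e' = b')
    (hφ : p.map φ ≫ eqToHom h' = eqToHom x.2 ≫ g) :
    (Fib p hp).map g x = ⟨e', h'⟩ :=
  transp_eq p hp g x φ h' hφ

/-- Each `Fib.map` is an isomorphism. -/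
lemma Fib_map_isIso {b b' : B} (g : b ⟶ b') : IsIso ((Fib p hp).map g) := by
  -- inverse via target lifts
  have inv : ∀ y : (Fib p hp).obj b', {l : Σ e0 : E, (e0 ⟶ y.1) // p.obj l.1 = b ∧
      (⟨p.obj l.1, p.map l.2⟩ : Σ b0 : B, (b0 ⟶ p.obj y.1)) = ⟨b, g ≫ eqToHom y.2.symm⟩} := by
    intro y
    have := (covering_tgt p hp y.1 ⟨b, g ≫ eqToHom y.2.symm⟩).exists
    exact ⟨this.choose, congrArg Sigma.fst this.choose_spec, this.choose_spec⟩
  refine ⟨TypeCat.ofHom fun y => ⟨(inv y).1.1, (inv y).2.1⟩, ?_, ?_⟩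
  · refine ConcreteCategory.hom_ext _ _ fun x => ?_
    -- inv (map g x) = x
    set y := (Fib p hp).map g x with hy
    have hyval : y = ⟨(transp p hp g x).1, transp_obj p hp g x⟩ := rfl
    -- candidate target lift : transp.2 : x.1 ⟶ y.1
    have hcand : (⟨p.obj x.1, p.map (transp p hp g x).2⟩ : Σ b0 : B, (b0 ⟶ p.obj y.1))
        = ⟨b, g ≫ eqToHom y.2.symm⟩ := by
      apply sigma_src_ext _ _ x.2
      have hm : p.map (transp p hp g x).2
          = eqToHom x.2 ≫ g ≫ eqToHom (transp_obj p hp g x).symm := by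
        rw [← Category.assoc, ← transp_map p hp g x]; simp
      erw [hm]; exact aux4 _ _ _ _ _
    have := tgt_lift_unique p hp (inv y).1.2 (transp p hp g x).2 ((inv y).2.2.trans hcand.symm)
    have hfst : (inv y).1.1 = x.1 := congrArg Sigma.fst this
    exact Subtype.ext hfst
  · refine ConcreteCategory.hom_ext _ _ fun y => ?_
    -- map g (inv y) = y
    obtain ⟨hb, hmap⟩ := sigma_src_eq (inv y).2.2
    have : (Fib p hp).map g ⟨(inv y).1.1, (inv y).2.1⟩ = ⟨y.1, y.2⟩ := by
      apply Fib_map_eq p hp g _ ((inv y).1.2) y.2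
      show p.map (inv y).1.2 ≫ eqToHom y.2 = eqToHom (inv y).2.1 ≫ g
      have hm : p.map (inv y).1.2 = eqToHom (inv y).2.1 ≫ g ≫ eqToHom y.2.symm := by
        calc p.map (inv y).1.2 = eqToHom hb ≫ (eqToHom hb.symm ≫ p.map (inv y).1.2) := by simp
          _ = eqToHom (inv y).2.1 ≫ g ≫ eqToHom y.2.symm := by rw [hmap]
      simp [hm]
    exact this

end Fiber
end Paper
namespace Paper
section Pi

variable {C : Type u} [Category.{v} C] {D : Type u'} [Category.{v'} D]

lemma pi_isIso {a b : piCat C} (ψ : a ⟶ b) : IsIso ψ := by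
  have h : (MorphismProperty.isomorphisms (piCat C)) = ⊤ :=
    Localization.Construction.morphismProperty_eq_top' _
      (fun X Y f => piQ_isIso C f) (fun X Y e _ => (inferInstance : IsIso e.inv))
  have : (MorphismProperty.isomorphisms (piCat C)) ψ := by rw [h]; trivial
  exact this

lemma piQ_comp_piMap (F : C ⥤ D) : piQ C ⋙ piMap F = F ⋙ piQ D :=
  Localization.Construction.fac _ _

lemma piMap_comp {D' : Type*} [Category D'] (F : C ⥤ D) (G : D ⥤ D') :
    piMap (F ⋙ G) = piMap F ⋙ piMap G := by
  have h1 : piQ C ⋙ (piMap F ⋙ piMap G) = (F ⋙ G) ⋙ piQ D' := by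
    calc piQ C ⋙ (piMap F ⋙ piMap G) = (piQ C ⋙ piMap F) ⋙ piMap G := rfl
      _ = (F ⋙ piQ D) ⋙ piMap G := by rw [piQ_comp_piMap]
      _ = F ⋙ (piQ D ⋙ piMap G) := rfl
      _ = F ⋙ (G ⋙ piQ D') := by rw [piQ_comp_piMap]
      _ = (F ⋙ G) ⋙ piQ D' := rfl
  exact Localization.Construction.uniq _ _ ((piQ_comp_piMap (F ⋙ G)).trans h1.symm)

lemma pi1Cast_hom {x y : C} (h : x = y) (α : pi1 C x) :
    (pi1Cast h α).hom
      = eqToHom (congrArg (piQ C).obj h).symm ≫ α.hom ≫ eqToHom (congrArg (piQ C).obj h) := by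
  subst h
  have : pi1Cast (rfl : x = x) α = α := rfl
  rw [this]; simp

lemma pi1Map_hom (F : C ⥤ D) (x : C) (α : pi1 C x) :
    (pi1Map F x α).hom = (piMap F).map α.hom := rfl

end Pi

section Taut

variable {E : Type u} {B : Type u'} [Category.{v} E] [Category.{v'} B]
variable (p : E ⥤ B) (hp : IsCovering p)

/-- The monodromy functor `π(B) ⥤ Type` of a covering. -/
noncomputable def FibBar : piCat B ⥤ Type u :=
  Localization.Construction.lift (Fib p hp) (fun _ _ f _ => Fib_map_isIso p hp f)

lemma piQ_comp_FibBar : piQ B ⋙ FibBar p hp = Fib p hp :=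
  Localization.Construction.fac _ _

/-- The tautological section of the monodromy functor pulled back to `π(E)`. -/
lemma taut {e e' : E} (ψ : (piQ E).obj e ⟶ (piQ E).obj e') :
    (FibBar p hp).map ((piMap p).map ψ) ⟨e, rfl⟩ = ⟨e', rfl⟩ := by
  let τ : piQ E ⋙ (Functor.const (piCat E)).obj PUnit.{u+1} ⟶ piQ E ⋙ (piMap p ⋙ FibBar p hp) :=
    { app := fun e => TypeCat.ofHom fun _ => (⟨e, rfl⟩ : {e0 : E // p.obj e0 = p.obj e})
      naturality := by
        intro a b φ
        refine ConcreteCategory.hom_ext _ _ fun u => ?_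
        show (⟨b, rfl⟩ : {e0 : E // p.obj e0 = p.obj b})
            = (Fib p hp).map (p.map φ) ⟨a, rfl⟩
        exact (Fib_map_eq p hp (p.map φ) ⟨a, rfl⟩ φ rfl (by simp)).symm }
  let t := Localization.Construction.natTransExtension τ
  have hnat := t.naturality ψ
  have happ : ∀ (x : E), t.app ((piQ E).obj x) = τ.app x := fun x =>
    Localization.Construction.NatTransExtension.app_eq τ x
  have := ConcreteCategory.congr_hom hnat PUnit.unit
  rw [happ e, happ e'] at this
  exact this.symm

end Taut
end Paper
namespace Paper
section Lift

variable {E : Type u} {B : Type u'} [Category.{v} E] [Category.{v'} B]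
variable (p : E ⥤ B) (hp : IsCovering p)
include hp

lemma src_unique' {e e₁ e₂ : E} (φ₁ : e ⟶ e₁) (φ₂ : e ⟶ e₂)
    (h : (⟨p.obj e₁, p.map φ₁⟩ : Σ b : B, (p.obj e ⟶ b)) = ⟨p.obj e₂, p.map φ₂⟩) :
    ∃ hb : e₁ = e₂, φ₁ ≫ eqToHom hb = φ₂ :=
  sigma_tgt_eq (src_lift_unique p hp φ₁ φ₂ h)

lemma tgt_unique' {e e₁ e₂ : E} (φ₁ : e₁ ⟶ e) (φ₂ : e₂ ⟶ e)
    (h : (⟨p.obj e₁, p.map φ₁⟩ : Σ b : B, (b ⟶ p.obj e)) = ⟨p.obj e₂, p.map φ₂⟩) :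
    ∃ hb : e₁ = e₂, eqToHom hb.symm ≫ φ₁ = φ₂ :=
  sigma_src_eq (tgt_lift_unique p hp φ₁ φ₂ h)

omit hp

lemma proj_eq_src {e e₁ e₂ : E} (φ₁ : e ⟶ e₁) (φ₂ : e ⟶ e₂) {c : B}
    (h₁ : p.obj e₁ = c) (h₂ : p.obj e₂ = c)
    (hm : p.map φ₁ ≫ eqToHom h₁ = p.map φ₂ ≫ eqToHom h₂) :
    (⟨p.obj e₁, p.map φ₁⟩ : Σ b : B, (p.obj e ⟶ b)) = ⟨p.obj e₂, p.map φ₂⟩ := by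
  apply sigma_tgt_ext _ _ (h₁.trans h₂.symm)
  have : p.map φ₁ = (p.map φ₂ ≫ eqToHom h₂) ≫ eqToHom h₁.symm := by rw [← hm]; simp
  rw [this]; simp

lemma proj_eq_tgt {e e₁ e₂ : E} (φ₁ : e₁ ⟶ e) (φ₂ : e₂ ⟶ e) {c : B}
    (h₁ : p.obj e₁ = c) (h₂ : p.obj e₂ = c)
    (hm : eqToHom h₁.symm ≫ p.map φ₁ = eqToHom h₂.symm ≫ p.map φ₂) :
    (⟨p.obj e₁, p.map φ₁⟩ : Σ b : B, (b ⟶ p.obj e)) = ⟨p.obj e₂, p.map φ₂⟩ := by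
  apply sigma_src_ext _ _ (h₁.trans h₂.symm)
  have : p.map φ₁ = eqToHom h₁ ≫ eqToHom h₂.symm ≫ p.map φ₂ := by rw [← hm]; simp
  rw [this]; simp

include hp

/-- Existence of the lift from a flat section of the fiber functor. -/
lemma lift_exists {X : Type w} [Category.{v} X] (f : X ⥤ B)
    (s : ∀ x : X, (Fib p hp).obj (f.obj x))
    (hsnat : ∀ {x x' : X} (u : x ⟶ x'), (Fib p hp).map (f.map u) (s x) = s x') :
    ∃ g : X ⥤ E, g ⋙ p = f ∧ ∀ x, g.obj x = (s x).1 := by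
  have hproj : ∀ {x x' : X} (u : x ⟶ x'),
      p.map ((transp p hp (f.map u) (s x)).2
          ≫ eqToHom (congrArg Subtype.val (hsnat u)))
        = eqToHom (s x).2 ≫ f.map u ≫ eqToHom (s x').2.symm := by
    intro x x' u
    erw [Functor.map_comp, eqToHom_map]
    have hm : p.map (transp p hp (f.map u) (s x)).2
        = eqToHom (s x).2 ≫ f.map u ≫ eqToHom (transp_obj p hp (f.map u) (s x)).symm := by
      rw [← Category.assoc, ← transp_map p hp (f.map u) (s x)]; simp
    rw [hm]; simp
  refine ⟨{
    obj := fun x => (s x).1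
    map := fun {x x'} u => (transp p hp (f.map u) (s x)).2
        ≫ eqToHom (congrArg Subtype.val (hsnat u))
    map_id := ?_
    map_comp := ?_ }, ?_, fun x => rfl⟩
  · intro x
    have hside : p.map ((transp p hp (f.map (𝟙 x)) (s x)).2
          ≫ eqToHom (congrArg Subtype.val (hsnat (𝟙 x)))) ≫ eqToHom (s x).2
        = p.map (𝟙 (s x).1) ≫ eqToHom (s x).2 := by rw [hproj]; simp
    obtain ⟨hb, hφ⟩ := src_unique' p hp
      ((transp p hp (f.map (𝟙 x)) (s x)).2 ≫ eqToHom (congrArg Subtype.val (hsnat (𝟙 x))))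
      (𝟙 (s x).1)
      (proj_eq_src p _ _ (s x).2 (s x).2 hside)
    simpa using hφ
  · intro x x' x'' u v
    have hside : p.map ((transp p hp (f.map (u ≫ v)) (s x)).2
          ≫ eqToHom (congrArg Subtype.val (hsnat (u ≫ v)))) ≫ eqToHom (s x'').2
        = p.map (((transp p hp (f.map u) (s x)).2 ≫ eqToHom (congrArg Subtype.val (hsnat u)))
          ≫ ((transp p hp (f.map v) (s x')).2 ≫ eqToHom (congrArg Subtype.val (hsnat v))))
          ≫ eqToHom (s x'').2 := by
      rw [hproj (u ≫ v), p.map_comp, hproj u, hproj v, f.map_comp]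
      simp
    obtain ⟨hb, hφ⟩ := src_unique' p hp
      ((transp p hp (f.map (u ≫ v)) (s x)).2 ≫ eqToHom (congrArg Subtype.val (hsnat (u ≫ v))))
      (((transp p hp (f.map u) (s x)).2 ≫ eqToHom (congrArg Subtype.val (hsnat u)))
        ≫ ((transp p hp (f.map v) (s x')).2 ≫ eqToHom (congrArg Subtype.val (hsnat v))))
      (proj_eq_src p _ _ (s x'').2 (s x'').2 hside)
    simpa using hφ
  · refine CategoryTheory.Functor.ext (fun x => (s x).2) ?_
    intro x x' u
    show p.map _ = _
    rw [hproj]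

/-- Uniqueness of lifts through a covering. -/
lemma lift_unique {X : Type w} [Category.{v''} X] [IsConnected X] (f : X ⥤ B)
    (g g' : X ⥤ E) (hg : g ⋙ p = f) (hg' : g' ⋙ p = f) (x₀ : X)
    (h0 : g'.obj x₀ = g.obj x₀) : g' = g := by
  have hobj : ∀ x : X, g'.obj x = g.obj x := by
    refine fun x => induct_on_objects {x : X | g'.obj x = g.obj x} h0 ?_ x
    intro a b u
    constructor
    · intro (ha : g'.obj a = g.obj a)
      have hside : p.map (g'.map u) ≫ eqToHom (Functor.congr_obj hg' b)
          = p.map (eqToHom ha ≫ g.map u) ≫ eqToHom (Functor.congr_obj hg b) := by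
        have h1 := Functor.congr_hom hg' u
        have h2 := Functor.congr_hom hg u
        simp only [Functor.comp_obj, Functor.comp_map] at h1 h2
        rw [Functor.map_comp, eqToHom_map, h1, h2]
        simp
      have hproj := proj_eq_src p (g'.map u) (eqToHom ha ≫ g.map u)
        (Functor.congr_obj hg' b) (Functor.congr_obj hg b) hside
      obtain ⟨hb, -⟩ := src_unique' p hp _ _ hproj
      exact hb
    · intro (hb : g'.obj b = g.obj b)
      have hside : eqToHom (Functor.congr_obj hg' a).symm ≫ p.map (g'.map u)
          = eqToHom (Functor.congr_obj hg a).symm ≫ p.map (g.map u ≫ eqToHom hb.symm) := by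
        have h1 := Functor.congr_hom hg' u
        have h2 := Functor.congr_hom hg u
        simp only [Functor.comp_obj, Functor.comp_map] at h1 h2
        rw [Functor.map_comp, eqToHom_map, h1, h2]
        simp
      have hproj := proj_eq_tgt p (g'.map u) (g.map u ≫ eqToHom hb.symm)
        (Functor.congr_obj hg' a) (Functor.congr_obj hg a) hside
      obtain ⟨ha, -⟩ := tgt_unique' p hp _ _ hproj
      exact ha
  refine CategoryTheory.Functor.ext hobj ?_
  intro x x' u
  have hside : p.map (g'.map u) ≫ eqToHom (Functor.congr_obj hg' x')
      = p.map (eqToHom (hobj x) ≫ g.map u ≫ eqToHom (hobj x').symm)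
        ≫ eqToHom (Functor.congr_obj hg' x') := by
    have h1 := Functor.congr_hom hg' u
    have h2 := Functor.congr_hom hg u
    simp only [Functor.comp_obj, Functor.comp_map] at h1 h2
    rw [Functor.map_comp, Functor.map_comp, eqToHom_map, eqToHom_map, h1, h2]
    simp
  obtain ⟨hb, hφ⟩ := src_unique' p hp (g'.map u)
    (eqToHom (hobj x) ≫ g.map u ≫ eqToHom (hobj x').symm)
    (proj_eq_src p _ _ (Functor.congr_obj hg' x') (Functor.congr_obj hg' x') hside)
  simpa using hφ

end Lift
end Paper
namespace Paper

lemma pi_conn {X : Type w} [Category.{v} X] [IsConnected X] (x₀ x : X) :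
    Nonempty ((piQ X).obj x₀ ⟶ (piQ X).obj x) := by
  refine induct_on_objects {x : X | Nonempty ((piQ X).obj x₀ ⟶ (piQ X).obj x)} ⟨𝟙 _⟩ ?_ x
  intro a b u
  haveI := piQ_isIso X u
  exact ⟨fun ⟨γ⟩ => ⟨γ ≫ (piQ X).map u⟩, fun ⟨γ⟩ => ⟨γ ≫ inv ((piQ X).map u)⟩⟩

section Cast
variable {E : Type u} {B : Type u'} [Category.{v} E] [Category.{v'} B]
variable (p : E ⥤ B) (hp : IsCovering p)

lemma fibbar_cast {b b' : B} (h : b = b') (x : (Fib p hp).obj b) :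
    (FibBar p hp).map (eqToHom (congrArg (piQ B).obj h)) x = ⟨x.1, x.2.trans h⟩ := by
  subst h
  have h1 : eqToHom (congrArg (piQ B).obj (rfl : b = b)) = 𝟙 ((piQ B).obj b) := rfl
  rw [h1, CategoryTheory.Functor.map_id]
  rfl

end Cast

theorem covering_lifting_criterion'
    (E : Type u) (B : Type u') (X : Type w) [Category.{v} E] [Category.{v'} B] [Category.{v} X]
    (p : E ⥤ B) (hp : IsCovering p) [IsConnected X] (f : X ⥤ B)
    (b₀ : B) (e₀ : E) (x₀ : X) (he : p.obj e₀ = b₀) (hx : f.obj x₀ = b₀) :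
    (∃! g : X ⥤ E, g ⋙ p = f ∧ g.obj x₀ = e₀) ↔
      ((pi1Cast hx).toMonoidHom.comp (pi1Map f x₀)).range ≤
        ((pi1Cast he).toMonoidHom.comp (pi1Map p e₀)).range := by
  subst he
  constructor
  · rintro ⟨g, ⟨hgp, hg0⟩, -⟩
    subst hg0
    subst hgp
    intro α hα
    rw [MonoidHom.mem_range] at hα ⊢
    obtain ⟨δ, rfl⟩ := hα
    refine ⟨pi1Map g x₀ δ, ?_⟩
    simp only [MonoidHom.comp_apply, MulEquiv.toMonoidHom_eq_coe, MulEquiv.coe_toMonoidHom,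
      MonoidHom.coe_coe]
    apply Iso.ext
    rw [pi1Cast_hom, pi1Cast_hom, pi1Map_hom, pi1Map_hom, pi1Map_hom]
    have hc := Functor.congr_hom (piMap_comp g p) δ.hom
    rw [hc]
    simp [eqToHom_trans]
    exact aux5 _ _ _
  · intro hsub
    have hγ : ∀ x : X, Nonempty ((piQ X).obj x₀ ⟶ (piQ X).obj x) := pi_conn x₀
    let γ : ∀ x : X, ((piQ X).obj x₀ ⟶ (piQ X).obj x) := fun x => (hγ x).some
    let e₀' : (Fib p hp).obj (f.obj x₀) := ⟨e₀, hx.symm⟩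
    have loopfix : ∀ ψ : (piQ X).obj x₀ ⟶ (piQ X).obj x₀,
        (FibBar p hp).map ((piMap f).map ψ) e₀' = e₀' := by
      intro ψ
      haveI := pi_isIso ψ
      have hmem := hsub (MonoidHom.mem_range.mpr ⟨asIso ψ, rfl⟩)
      obtain ⟨ε, hε⟩ := MonoidHom.mem_range.mp hmem
      simp only [MonoidHom.comp_apply, MulEquiv.toMonoidHom_eq_coe, MulEquiv.coe_toMonoidHom,
        MonoidHom.coe_coe] at hε
      have hh := congrArg Iso.hom hε
      erw [MonoidHom.comp_apply, MonoidHom.coe_coe] at hh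
      erw [pi1Cast_hom, pi1Cast_hom, pi1Map_hom, pi1Map_hom] at hh
      simp only [asIso_hom, eqToHom_refl, Category.id_comp, Category.comp_id] at hh
      have h2 : (piMap f).map ψ
          = eqToHom (congrArg (piQ B).obj hx) ≫ (piMap p).map ε.hom
            ≫ eqToHom (congrArg (piQ B).obj hx).symm := by
        erw [Category.comp_id] at hh; erw [hh]; exact aux6 _ _ _ _ _
      erw [h2, Functor.map_comp, Functor.map_comp]
      erw [types_comp_apply, types_comp_apply]
      have c1 : (FibBar p hp).map (eqToHom (congrArg (piQ B).obj hx)) e₀'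
          = (⟨e₀, rfl⟩ : (Fib p hp).obj (p.obj e₀)) := by
        rw [fibbar_cast p hp hx e₀']; rfl
      erw [c1, taut p hp ε.hom]
      have c2 : (FibBar p hp).map (eqToHom (congrArg (piQ B).obj hx).symm)
          (⟨e₀, rfl⟩ : (Fib p hp).obj (p.obj e₀)) = e₀' := by
        have := fibbar_cast p hp hx.symm (⟨e₀, rfl⟩ : (Fib p hp).obj (p.obj e₀))
        exact this
      exact c2
    let s : ∀ x : X, (Fib p hp).obj (f.obj x) :=
      fun x => (FibBar p hp).map ((piMap f).map (γ x)) e₀'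
    have hs0 : s x₀ = e₀' := loopfix (γ x₀)
    have hsnat : ∀ {x x' : X} (u : x ⟶ x'),
        (Fib p hp).map (f.map u) (s x) = s x' := by
      intro x x' u
      haveI := pi_isIso (γ x')
      have h1 : (Fib p hp).map (f.map u) (s x)
          = (FibBar p hp).map ((piMap f).map (γ x ≫ (piQ X).map u)) e₀' := by
        show (FibBar p hp).map ((piMap f).map ((piQ X).map u))
            ((FibBar p hp).map ((piMap f).map (γ x)) e₀') = _
        rw [Functor.map_comp, Functor.map_comp]
        rfl
      have h2 : γ x ≫ (piQ X).map u = ((γ x ≫ (piQ X).map u) ≫ inv (γ x')) ≫ γ x' := by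
        simp
      rw [h1, h2, Functor.map_comp, Functor.map_comp]
      show (FibBar p hp).map ((piMap f).map (γ x'))
          ((FibBar p hp).map ((piMap f).map ((γ x ≫ (piQ X).map u) ≫ inv (γ x'))) e₀') = _
      rw [loopfix ((γ x ≫ (piQ X).map u) ≫ inv (γ x'))]
    obtain ⟨g, hgp, hgobj⟩ := lift_exists p hp f s hsnat
    have hg0 : g.obj x₀ = e₀ := (hgobj x₀).trans (congrArg Subtype.val hs0)
    refine ⟨g, ⟨hgp, hg0⟩, ?_⟩
    rintro g' ⟨hg'p, hg'0⟩
    exact lift_unique p hp f g g' hgp hg'p x₀ (hg'0.trans hg0.symm)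

end Paper

namespace Paper

/-- **Statement 9 (lifting criterion).** Let `p : E ⥤ B` be a covering of small categories,
`X` a path connected small category, `f : X ⥤ B` a functor, `b₀` an object of `B`,
`e₀ ∈ p⁻¹(b₀)` and `x₀` an object of `X` with `f(x₀) = b₀`.  Then there is a (necessarily
unique) functor `g : X ⥤ E` with `p ∘ g = f` and `g(x₀) = e₀` iff
`f₊(π₁(X, x₀)) ⊆ p₊(π₁(E, e₀))` inside `π₁(B, b₀)`. -/
theorem covering_lifting_criterion
    (E : Type u) (B : Type u') (X : Type w) [Category.{v} E] [Category.{v'} B] [Category.{v} X]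
    (p : E ⥤ B) (hp : IsCovering p) [IsConnected X] (f : X ⥤ B)
    (b₀ : B) (e₀ : E) (x₀ : X) (he : p.obj e₀ = b₀) (hx : f.obj x₀ = b₀) :
    (∃! g : X ⥤ E, g ⋙ p = f ∧ g.obj x₀ = e₀) ↔
      ((pi1Cast hx).toMonoidHom.comp (pi1Map f x₀)).range ≤
        ((pi1Cast he).toMonoidHom.comp (pi1Map p e₀)).range :=
  covering_lifting_criterion' E B X p hp f b₀ e₀ x₀ he hx

end Paper
end

section
/- Let (C,∗) be a pointed, path connected small category. Then the projection T : Ĉ → C from the Grothendieck construction of Hom_{π(C)}(∗,−) is a covering of small categories. -/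
open CategoryTheory

universe v u v' u' w

namespace Paper

variable (C : Type u) [Category.{v} C]

/-- The functor `Hom_{π(C)}(∗, −) : C ⥤ Type`. -/
noncomputable def homFromBase (x : C) : C ⥤ Type (max u v) :=
  piQ C ⋙ coyoneda.obj (Opposite.op ((piQ C).obj x))

/-- The category `Ĉ`: the Grothendieck construction (category of elements) of
`Hom_{π(C)}(∗, −) : C ⥤ Type`. -/
noncomputable def Chat (x : C) := (homFromBase C x).Elements

noncomputable instance (x : C) : Category (Chat C x) := by unfold Chat; infer_instance

/-- The projection `T : Ĉ ⥤ C`, `(c, w) ↦ c`. -/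
noncomputable def chatT (x : C) : Chat C x ⥤ C := CategoryOfElements.π _

/-- The base point `(∗, id)` of `Ĉ`. -/
noncomputable def chatPt (x : C) : Chat C x := ⟨x, 𝟙 ((piQ C).obj x)⟩

end Paper

namespace Paper

lemma homFromBase_map' {C : Type u} [Category.{v} C] {x : C} {c c' : C} (g : c ⟶ c')
    (w : (homFromBase C x).obj c) :
    (homFromBase C x).map g w = w ≫ (piQ C).map g := rfl

lemma elements_snd_eq {C : Type u} [Category.{v} C] {F : C ⥤ Type w} {p q : F.Elements}
    (h : p = q) : p.snd = F.map (eqToHom (congrArg Sigma.fst h).symm) q.snd := by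
  subst h; simp

lemma chat_hom_ext {C : Type u} [Category.{v} C] {x : C} {e e' : Chat C x}
    {f g : e ⟶ e'} (h : (chatT C x).map f = (chatT C x).map g) : f = g :=
  Subtype.ext h

/-- Functors out of `Pt` agree as soon as they agree on the unique object. -/
lemma pt_functor_ext {E : Type*} [Category E] {F G : Pt ⥤ E}
    (h : F.obj ⟨PUnit.unit⟩ = G.obj ⟨PUnit.unit⟩) : F = G := by
  have hobj : ∀ p : Pt, F.obj p = G.obj p := by rintro ⟨⟨⟩⟩; exact h
  refine CategoryTheory.Functor.ext hobj ?_
  rintro ⟨⟨⟩⟩ ⟨⟨⟩⟩ f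
  have : f = 𝟙 (⟨PUnit.unit⟩ : Pt) := Subsingleton.elim _ _
  subst this
  simp

lemma aux_comp {C : Type u} [Category.{v} C] {D : Type u'} [Category.{v'} D] (F : C ⥤ D)
    {X : D} {a b c d : C} (w : X ⟶ F.obj a) (p : a = b) (q : b = c) (r : a = c) (k : c ⟶ d) :
    (w ≫ F.map (eqToHom p)) ≫ F.map (eqToHom q ≫ k) = w ≫ F.map (eqToHom r ≫ k) := by
  subst p q; simp
lemma aux_comp2 {C : Type u} [Category.{v} C] {a a' b c c' : C} (p : a = b) (k : b ⟶ c)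
    (q : c = c') (p' : a = a') (p'' : a' = b) (q' : c = c') :
    eqToHom p ≫ k ≫ eqToHom q = eqToHom p' ≫ (eqToHom p'' ≫ k) ≫ eqToHom q' := by
  subst p' p''; simp
lemma aux_comp3 {C : Type u} [Category.{v} C] {a b c c' c'' : C} (p p' : a = b) (k : b ⟶ c)
    (q : c = c'') (r : c' = c'') (r' : c = c') :
    eqToHom p ≫ k ≫ eqToHom q = eqToHom p' ≫ (k ≫ eqToHom r') ≫ eqToHom r := by
  subst r' r; simp
lemma aux_comp4 {C : Type u} [Category.{v} C] {D : Type u'} [Category.{v'} D] (F : C ⥤ D)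
    {X : D} {a b c c' c'' : C} (w : X ⟶ F.obj a) (p : a = b) (k : b ⟶ c) (q : c = c')
    (q2 : c = c'') (r : c'' = c') :
    (w ≫ F.map (eqToHom p)) ≫ F.map (k ≫ eqToHom q) =
      (w ≫ F.map (eqToHom p ≫ k ≫ eqToHom q2)) ≫ F.map (eqToHom r) := by
  subst q2 r; simp
lemma aux_comp5 {C : Type u} [Category.{v} C] {a b b' : C} (k k' : a ⟶ b) (hk : k = k')
    (p : a = a) (q q' : b = b') : k ≫ eqToHom q = eqToHom p ≫ k' ≫ eqToHom q' := by
  subst hk q; simp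
/-- **Statement 11.** For a pointed path connected small category `(C, ∗)`, the projection
`T : Ĉ ⥤ C` from the Grothendieck construction of `Hom_{π(C)}(∗, −)` is a covering. -/
theorem chatT_isCovering (C : Type u) [Category.{v} C] [IsConnected C] (x : C) :
    IsCovering (chatT C x) := by
  constructor
  · -- lifting against `pick0`
    intro F G hcomm
    set e : Chat C x := F.obj ⟨PUnit.unit⟩ with he_def
    have he : e.1 = G.obj 0 := Functor.congr_obj hcomm ⟨PUnit.unit⟩
    set f01 : (0 : Fin 2) ⟶ 1 := homOfLE (by decide) with hf01
    set g : e.1 ⟶ G.obj 1 := eqToHom he ≫ G.map f01 with hg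
    set e1 : Chat C x := ⟨G.obj 1, (homFromBase C x).map g e.2⟩ with he1
    set m : e ⟶ e1 := ⟨g, rfl⟩ with hm
    refine ⟨ComposableArrows.mk₁ m, ⟨?_, ?_⟩, ?_⟩
    · exact pt_functor_ext rfl
    · refine ComposableArrows.ext₁ he rfl ?_
      show g = _
      simp only [hg]
      simp
      congr 1
      exact (Category.comp_id _).symm
    · rintro H' ⟨h1, h2⟩
      have hobj0 : H'.obj 0 = e := Functor.congr_obj h1 ⟨PUnit.unit⟩
      have hb0 : (H'.obj 0).1 = G.obj 0 := Functor.congr_obj h2 0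
      have hb1 : (H'.obj 1).1 = G.obj 1 := Functor.congr_obj h2 1
      have hmap : (H'.map f01).1 = eqToHom hb0 ≫ G.map f01 ≫ eqToHom hb1.symm :=
        Functor.congr_hom h2 f01
      have hprop : (H'.obj 0).2 ≫ (piQ C).map (H'.map f01).1 = (H'.obj 1).2 :=
        (H'.map f01).2
      have hobj1 : H'.obj 1 = e1 := by
        refine Functor.Elements.ext _ _ hb1 ?_
        rw [homFromBase_map', ← hprop, hmap, elements_snd_eq hobj0, homFromBase_map']
        show _ = e.2 ≫ (piQ C).map (eqToHom he ≫ G.map f01)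
        simp [← Functor.map_comp]
        exact aux_comp _ _ _ _ _ _
      refine ComposableArrows.ext₁ hobj0 hobj1 ?_
      apply chat_hom_ext
      show (H'.map f01).1 = (chatT C x).map (eqToHom hobj0) ≫ g ≫ (chatT C x).map (eqToHom hobj1.symm)
      simp only [eqToHom_map]
      show (H'.map f01).1 = _ ≫ g ≫ _
      rw [hmap]
      simp only [hg]
      exact aux_comp2 _ _ _ _ _ _
  · -- lifting against `pick1`
    intro F G hcomm
    set e : Chat C x := F.obj ⟨PUnit.unit⟩ with he_def
    have he : e.1 = G.obj 1 := Functor.congr_obj hcomm ⟨PUnit.unit⟩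
    set f01 : (0 : Fin 2) ⟶ 1 := homOfLE (by decide) with hf01
    set g : G.obj 0 ⟶ e.1 := G.map f01 ≫ eqToHom he.symm with hg
    haveI : IsIso ((piQ C).map g) := piQ_isIso C g
    set e0 : Chat C x := ⟨G.obj 0, e.2 ≫ inv ((piQ C).map g)⟩ with he0
    have hme : (homFromBase C x).map g e0.2 = e.2 := by
      rw [homFromBase_map']
      exact (Category.assoc _ _ _).trans (by rw [IsIso.inv_hom_id]; exact Category.comp_id _)
    set m : e0 ⟶ e := ⟨g, hme⟩ with hm
    refine ⟨ComposableArrows.mk₁ m, ⟨?_, ?_⟩, ?_⟩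
    · exact pt_functor_ext rfl
    · refine ComposableArrows.ext₁ rfl he ?_
      show g = _
      simp only [hg]
      simp
      exact aux_comp5 _ _ rfl _ _ _
    · rintro H' ⟨h1, h2⟩
      have hobj1 : H'.obj 1 = e := Functor.congr_obj h1 ⟨PUnit.unit⟩
      have hb0 : (H'.obj 0).1 = G.obj 0 := Functor.congr_obj h2 0
      have hb1 : (H'.obj 1).1 = G.obj 1 := Functor.congr_obj h2 1
      have hmap : (H'.map f01).1 = eqToHom hb0 ≫ G.map f01 ≫ eqToHom hb1.symm :=
        Functor.congr_hom h2 f01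
      have hprop : (H'.obj 0).2 ≫ (piQ C).map (H'.map f01).1 = (H'.obj 1).2 :=
        (H'.map f01).2
      have hobj0 : H'.obj 0 = e0 := by
        refine Functor.Elements.ext _ _ hb0 ?_
        rw [homFromBase_map']
        show _ = e.2 ≫ inv ((piQ C).map g)
        refine (IsIso.eq_comp_inv _).mpr ?_
        rw [elements_snd_eq hobj1.symm, homFromBase_map',
          ← hprop, hmap]
        simp only [hg]
        exact aux_comp4 _ _ _ _ _ _ _
      refine ComposableArrows.ext₁ hobj0 hobj1 ?_
      apply chat_hom_ext
      show (H'.map f01).1 = (chatT C x).map (eqToHom hobj0) ≫ g ≫ (chatT C x).map (eqToHom hobj1.symm)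
      simp only [eqToHom_map]
      show (H'.map f01).1 = _ ≫ g ≫ _
      rw [hmap]
      simp only [hg]
      exact aux_comp3 _ _ _ _ _ _

end Paper
end

section
/- A small category C is a groupoid if and only if the unique functor C → ∗ to the terminal category has the right lifting property with respect to every member of the set J; that is, the fibrant objects of the 1-type model structure on Cat are exactly the groupoids. Moreover, every small category is cofibrant (the functor ∅ → C is injective on objects). -/
open CategoryTheory

universe v u v' u' w
namespace Paper
open CategoryTheory

section Aux
variable {D : Type u'} [Category.{v'} D]

/-- Any two functors into a discrete category on a subsingleton are equal. -/
theorem toPt_ext {Y : Type*} [Category Y] {P : Type w} [Subsingleton P]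
    (F G : Y ⥤ Discrete P) : F = G := by
  refine CategoryTheory.Functor.ext (fun x => ?_) (fun _ _ _ => Subsingleton.elim _ _)
  exact Discrete.ext (Subsingleton.elim _ _)

def fin3Obj (c0 c1 c2 : D) : Fin 3 → D
  | ⟨0, _⟩ => c0
  | ⟨1, _⟩ => c1
  | ⟨2, _⟩ => c2

def fin3Map (c0 c1 c2 : D) (u : c0 ⟶ c1) (v : c1 ⟶ c2) :
    ∀ (i j : Fin 3), i ≤ j → (fin3Obj c0 c1 c2 i ⟶ fin3Obj c0 c1 c2 j)
  | ⟨0,_⟩, ⟨0,_⟩, _ => 𝟙 c0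
  | ⟨0,_⟩, ⟨1,_⟩, _ => u
  | ⟨0,_⟩, ⟨2,_⟩, _ => u ≫ v
  | ⟨1,_⟩, ⟨1,_⟩, _ => 𝟙 c1
  | ⟨1,_⟩, ⟨2,_⟩, _ => v
  | ⟨2,_⟩, ⟨2,_⟩, _ => 𝟙 c2
  | ⟨1,_⟩, ⟨0,_⟩, h => absurd h (by simp [Fin.le_def])
  | ⟨2,_⟩, ⟨0,_⟩, h => absurd h (by simp [Fin.le_def])
  | ⟨2,_⟩, ⟨1,_⟩, h => absurd h (by simp [Fin.le_def])
  | ⟨n+3,h⟩, _, _ => absurd h (by omega)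
  | _, ⟨n+3,h⟩, _ => absurd h (by omega)

def mkFin3 (c0 c1 c2 : D) (u : c0 ⟶ c1) (v : c1 ⟶ c2) : Fin 3 ⥤ D where
  obj := fin3Obj c0 c1 c2
  map {i j} f := fin3Map c0 c1 c2 u v i j (leOfHom f)
  map_id i := by
    match i with
    | ⟨0,_⟩ => rfl
    | ⟨1,_⟩ => rfl
    | ⟨2,_⟩ => rfl
    | ⟨n+3,h⟩ => exact absurd h (by omega)
  map_comp {i j k} f g := by
    have hf := leOfHom f
    have hg := leOfHom g
    match i, j, k with
    | ⟨0,_⟩, ⟨0,_⟩, ⟨0,_⟩ | ⟨0,_⟩, ⟨0,_⟩, ⟨1,_⟩ | ⟨0,_⟩, ⟨0,_⟩, ⟨2,_⟩ =>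
      exact (Category.id_comp _).symm
    | ⟨0,_⟩, ⟨1,_⟩, ⟨1,_⟩ | ⟨0,_⟩, ⟨2,_⟩, ⟨2,_⟩ =>
      exact (Category.comp_id _).symm
    | ⟨0,_⟩, ⟨1,_⟩, ⟨2,_⟩ => rfl
    | ⟨1,_⟩, ⟨1,_⟩, ⟨1,_⟩ | ⟨1,_⟩, ⟨1,_⟩, ⟨2,_⟩ => exact (Category.id_comp _).symm
    | ⟨1,_⟩, ⟨2,_⟩, ⟨2,_⟩ => exact (Category.comp_id _).symm
    | ⟨2,_⟩, ⟨2,_⟩, ⟨2,_⟩ => exact (Category.id_comp _).symm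
    | ⟨1,_⟩, ⟨0,_⟩, _ => exact absurd hf (by simp [Fin.le_def])
    | ⟨2,_⟩, ⟨0,_⟩, _ => exact absurd hf (by simp [Fin.le_def])
    | ⟨2,_⟩, ⟨1,_⟩, _ => exact absurd hf (by simp [Fin.le_def])
    | _, ⟨1,_⟩, ⟨0,_⟩ => exact absurd hg (by simp [Fin.le_def])
    | _, ⟨2,_⟩, ⟨0,_⟩ => exact absurd hg (by simp [Fin.le_def])
    | _, ⟨2,_⟩, ⟨1,_⟩ => exact absurd hg (by simp [Fin.le_def])
    | ⟨n+3,h⟩, _, _ => exact absurd h (by omega)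
    | _, ⟨n+3,h⟩, _ => exact absurd h (by omega)
    | _, _, ⟨n+3,h⟩ => exact absurd h (by omega)

end Aux
end Paper
namespace Paper
open CategoryTheory Opposite

section Aux2
variable {D : Type u'} [Category.{v'} D]

theorem not_a_le_z : ¬ (I2.a ≤ I2.z) := by rintro (h|h) <;> exact I2.noConfusion h
theorem not_b_le_z : ¬ (I2.b ≤ I2.z) := by rintro (h|h) <;> exact I2.noConfusion h
theorem not_a_le_b : ¬ (I2.a ≤ I2.b) := by rintro (h|h) <;> exact I2.noConfusion h
theorem not_b_le_a : ¬ (I2.b ≤ I2.a) := by rintro (h|h) <;> exact I2.noConfusion h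

def spanObj {x a b : D} (f : x ⟶ a) (g : x ⟶ b) : I2 → D
  | .z => x | .a => a | .b => b

def spanMap {x a b : D} (f : x ⟶ a) (g : x ⟶ b) :
    ∀ (i j : I2), i ≤ j → (spanObj f g i ⟶ spanObj f g j)
  | .z, .z, _ => 𝟙 x
  | .z, .a, _ => f
  | .z, .b, _ => g
  | .a, .a, _ => 𝟙 a
  | .b, .b, _ => 𝟙 b
  | .a, .z, h => absurd h not_a_le_z
  | .b, .z, h => absurd h not_b_le_z
  | .a, .b, h => absurd h not_a_le_b
  | .b, .a, h => absurd h not_b_le_a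

def spanFunctor {x a b : D} (f : x ⟶ a) (g : x ⟶ b) : I2 ⥤ D where
  obj := spanObj f g
  map {i j} h := spanMap f g i j (leOfHom h)
  map_id i := by cases i <;> rfl
  map_comp {i j k} u v := by
    have hu := leOfHom u
    have hv := leOfHom v
    cases i <;> cases j <;> cases k <;>
      first
        | exact absurd hu not_a_le_z | exact absurd hu not_b_le_z
        | exact absurd hu not_a_le_b | exact absurd hu not_b_le_a
        | exact absurd hv not_a_le_z | exact absurd hv not_b_le_z
        | exact absurd hv not_a_le_b | exact absurd hv not_b_le_a
        | exact (Category.id_comp _).symm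
        | exact (Category.comp_id _).symm

/-- RLP against the functor to the point reduces to an extension property. -/
theorem rlp_star_iff {A X : Type u'} [Category.{v'} A] [Category.{v'} X] (u : A ⥤ X)
    {C : Type u} [Category.{v} C] :
    FunctorRLP u (Functor.star C) ↔ ∀ F : A ⥤ C, ∃ H : X ⥤ C, u ⋙ H = F := by
  constructor
  · intro h F
    obtain ⟨H, h1, -⟩ := h F (Functor.star X) (toPt_ext _ _)
    exact ⟨H, h1⟩
  · intro h F G _
    obtain ⟨H, hH⟩ := h F
    exact ⟨H, hH, toPt_ext _ _⟩

/-- Transfer of the extension property to opposites. -/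
theorem ext_op {A X : Type*} [Category A] [Category X] (u : A ⥤ X)
    {C : Type u} [Category.{v} C]
    (h : ∀ F : A ⥤ Cᵒᵖ, ∃ H : X ⥤ Cᵒᵖ, u ⋙ H = F) :
    ∀ F : Aᵒᵖ ⥤ C, ∃ H : Xᵒᵖ ⥤ C, u.op ⋙ H = F := by
  intro F
  obtain ⟨K, hK⟩ := h (opOp A ⋙ F.op)
  exact ⟨K.leftOp, congrArg Functor.leftOp hK⟩

theorem lift_pick {X : Type*} [Category X] (x0 : X) (F : Pt ⥤ D) :
    ∃ H : X ⥤ D, (Functor.const Pt).obj x0 ⋙ H = F := by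
  refine ⟨(Functor.const X).obj (F.obj ⟨⟨⟩⟩),
    CategoryTheory.Functor.ext (fun x => ?_) (fun x y f => ?_)⟩
  · obtain ⟨⟨⟩⟩ := x; rfl
  · obtain ⟨⟨⟩⟩ := x; obtain ⟨⟨⟩⟩ := y
    rw [Subsingleton.elim f (𝟙 _)]
    simp

end Aux2
end Paper
namespace Paper
open CategoryTheory Opposite

section Aux3
variable {D : Type u'} [Category.{v'} D]

def fza : I2.z ⟶ I2.a := homOfLE (Or.inr rfl)
def fzb : I2.z ⟶ I2.b := homOfLE (Or.inr rfl)

theorem lift_i2 (hD : ∀ {x y : D} (f : x ⟶ y), IsIso f) (F : I2 ⥤ D) :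
    ∃ H : Fin 3 ⥤ D, i2Incl ⋙ H = F := by
  haveI : IsIso (F.map fza) := hD _
  refine ⟨mkFin3 (F.obj .z) (F.obj .a) (F.obj .b) (F.map fza) (inv (F.map fza) ≫ F.map fzb),
    CategoryTheory.Functor.ext (fun x => by cases x <;> rfl) (fun x y f => ?_)⟩
  cases x <;> cases y
  · rw [Subsingleton.elim f (𝟙 _)]; simp
  · rw [Subsingleton.elim f fza]
    show F.map fza = _
    simp
    erw [eqToHom_refl, eqToHom_refl, Category.id_comp, Category.comp_id]
  · rw [Subsingleton.elim f fzb]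
    show F.map fza ≫ inv (F.map fza) ≫ F.map fzb = _
    simp
    erw [eqToHom_refl, eqToHom_refl, Category.id_comp, Category.comp_id]
  · exact absurd (leOfHom f) not_a_le_z
  · rw [Subsingleton.elim f (𝟙 _)]; simp
  · exact absurd (leOfHom f) not_a_le_b
  · exact absurd (leOfHom f) not_b_le_z
  · exact absurd (leOfHom f) not_b_le_a
  · rw [Subsingleton.elim f (𝟙 _)]; simp

theorem lift_cs1 (hD : ∀ {x y : D} (f : x ⟶ y), IsIso f) (F : CS1 ⥤ D) :
    ∃ H : Fin 3 ⥤ D, cs1Incl ⋙ H = F := by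
  haveI : IsIso (F.map CS1.Hom.a) := hD _
  have key : F.map CS1.Hom.f = F.map CS1.Hom.g := by
    have h : F.map CS1.Hom.a ≫ F.map CS1.Hom.f = F.map CS1.Hom.a ≫ F.map CS1.Hom.g := by
      rw [← F.map_comp, ← F.map_comp]; rfl
    exact (cancel_epi (F.map CS1.Hom.a)).1 h
  refine ⟨mkFin3 (F.obj .x0) (F.obj .x1) (F.obj .x2) (F.map CS1.Hom.a) (F.map CS1.Hom.f),
    CategoryTheory.Functor.ext (fun x => by cases x <;> rfl) (fun x y f => ?_)⟩
  change CS1.Hom x y at f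
  cases f
  · show _ = _; cases x <;> simp [cs1Incl, mkFin3, fin3Map] <;> erw [Category.id_comp, Category.comp_id] <;> exact (F.map_id _).symm
  · show F.map CS1.Hom.a = _; simp; erw [eqToHom_refl, eqToHom_refl, Category.id_comp, Category.comp_id]
  · show F.map CS1.Hom.a ≫ F.map CS1.Hom.f = _
    rw [← F.map_comp]
    show F.map CS1.Hom.c = _
    simp
    erw [eqToHom_refl, eqToHom_refl, Category.id_comp, Category.comp_id]
  · show F.map CS1.Hom.f = _; simp; erw [eqToHom_refl, eqToHom_refl, Category.id_comp, Category.comp_id]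
  · show F.map CS1.Hom.f = _; rw [key]; simp; erw [eqToHom_refl, eqToHom_refl, Category.id_comp, Category.comp_id]

end Aux3
end Paper
namespace Paper
open CategoryTheory Opposite

section Aux4
variable {D : Type u'} [Category.{v'} D]

theorem ext_unop {A X : Type*} [Category A] [Category X] (u : A ⥤ X)
    {C : Type u} [Category.{v} C]
    (h : ∀ F : Aᵒᵖ ⥤ C, ∃ H : Xᵒᵖ ⥤ C, u.op ⋙ H = F) :
    ∀ F : A ⥤ Cᵒᵖ, ∃ H : X ⥤ Cᵒᵖ, u ⋙ H = F := by
  intro F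
  obtain ⟨H, hH⟩ := h F.leftOp
  exact ⟨H.rightOp, congrArg Functor.rightOp hH⟩

def h12 : (1 : Fin 3) ⟶ 2 := homOfLE (by decide)

theorem retraction_of_ext (h : ∀ F : I2 ⥤ D, ∃ H : Fin 3 ⥤ D, i2Incl ⋙ H = F)
    {x y : D} (f : x ⟶ y) : ∃ r : y ⟶ x, f ≫ r = 𝟙 x := by
  obtain ⟨H, E⟩ := h (spanFunctor f (𝟙 x))
  have e0 : H.obj (i2Incl.obj I2.z) = x := Functor.congr_obj E I2.z
  have e1 : H.obj (i2Incl.obj I2.a) = y := Functor.congr_obj E I2.a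
  have e2 : H.obj (i2Incl.obj I2.b) = x := Functor.congr_obj E I2.b
  have m1 : H.map (i2Incl.map fza) = eqToHom e0 ≫ f ≫ eqToHom e1.symm := by
    have := Functor.congr_hom E fza
    exact this
  have m2 : H.map (i2Incl.map fzb) = eqToHom (e0.trans e2.symm) := by
    have h' := Functor.congr_hom E fzb
    simp only [Functor.comp_map] at h'
    rw [h']
    show _ ≫ 𝟙 x ≫ _ = _
    erw [Category.id_comp, eqToHom_trans]
  have key : H.map (i2Incl.map fza) ≫ H.map h12 = H.map (i2Incl.map fzb) := by
    erw [← H.map_comp]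
    congr 1
    try exact Subsingleton.elim _ _
  refine ⟨eqToHom e1.symm ≫ H.map h12 ≫ eqToHom e2, ?_⟩
  calc f ≫ eqToHom e1.symm ≫ H.map h12 ≫ eqToHom e2
      = eqToHom e0.symm ≫ (H.map (i2Incl.map fza) ≫ H.map h12) ≫ eqToHom e2 := by
        rw [m1]; simp
    _ = eqToHom e0.symm ≫ H.map (i2Incl.map fzb) ≫ eqToHom e2 := by erw [key]; rfl
    _ = 𝟙 x := by rw [m2]; simp

end Aux4
end Paper

namespace Paper

/-- **Statement 15.** A small category `C` is a groupoid iff the unique functor `C ⥤ ∗` has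
the right lifting property with respect to every member of `J`; i.e. the fibrant objects of
the 1-type model structure are exactly the groupoids.  Moreover every small category is
cofibrant: the functor `∅ ⥤ C` is injective on objects. -/
theorem fibrant_iff_groupoid :
    (∀ (C : Type u) [Category.{v} C],
        (∀ {x y : C} (f : x ⟶ y), IsIso f) ↔ Is1Fibration (Functor.star C)) ∧
    (∀ (C : Type u) [Category.{v} C], Function.Injective (Functor.empty C).obj) := by
  constructor
  · intro C _
    constructor
    · intro hC
      have hCop : ∀ {P Q : Cᵒᵖ} (q : P ⟶ Q), IsIso q := by
        intro P Q q
        rw [← Quiver.Hom.op_unop q]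
        haveI := hC q.unop
        infer_instance
      refine ⟨?_, ?_, ?_, ?_, ?_, ?_⟩
      · exact (rlp_star_iff _).2 fun F => lift_pick (0 : Fin 2) F
      · exact (rlp_star_iff _).2 fun F => lift_pick (Opposite.op (0 : Fin 2)) F
      · exact (rlp_star_iff _).2 (lift_i2 fun f => hC f)
      · exact (rlp_star_iff _).2 (ext_op i2Incl (lift_i2 fun f => hCop f))
      · exact (rlp_star_iff _).2 (lift_cs1 fun f => hC f)
      · exact (rlp_star_iff _).2 (ext_op cs1Incl (lift_cs1 fun f => hCop f))
    · rintro ⟨-, -, h3, h4, -, -⟩ x y f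
      obtain ⟨r, hr⟩ := retraction_of_ext ((rlp_star_iff _).1 h3) f
      obtain ⟨s', hs'⟩ := retraction_of_ext (ext_unop i2Incl ((rlp_star_iff _).1 h4)) f.op
      have hs : s'.unop ≫ f = 𝟙 y := by
        have := congrArg Quiver.Hom.unop hs'
        simpa using this
      have hru : s'.unop = r := by
        rw [← Category.comp_id s'.unop, ← hr, ← Category.assoc, hs, Category.id_comp]
      exact ⟨⟨r, hr, by rw [← hru, hs]⟩⟩
  · intro C _ a b h
    exact a.as.elim

end Paper
end
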